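/- Let C > 0, D ∈ ℝ, N ∈ ℕ with N ≥ 1, and let x : ℝ → ℝ be continuous on [0, N] with x t ≥ e and li(x t) = C·t + D for every t ∈ [0, N]. Then ∏_{k=1}^{N} (1 − 1/(x k)) ≤ (log(x 1) / log(x N))^{1/C}. -/

import Mathlib

/-- The logarithmic integral `li t = ∫_2^t dτ / log τ`. -/
noncomputable def li (t : ℝ) : ℝ := ∫ τ in (2:ℝ)..t, 1 / Real.log τ

open MeasureTheory intervalIntegral Real

lemma aux_mem_two {a b s : ℝ} (ha : 2 ≤ a) (hb : 2 ≤ b) (hs : s ∈ Set.uIcc a b) :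
    2 ≤ s := le_trans (le_min ha hb) hs.1

lemma aux_integrable {a b : ℝ} (ha : 2 ≤ a) (hb : 2 ≤ b) :
    IntervalIntegrable (fun s => 1 / Real.log s) volume a b := by
  apply ContinuousOn.intervalIntegrable
  apply ContinuousOn.div continuousOn_const
  · exact Real.continuousOn_log.mono (fun s hs => by
      have h2 : 2 ≤ s := aux_mem_two ha hb hs
      simp only [Set.mem_compl_iff, Set.mem_singleton_iff]
      intro h; rw [h] at h2; norm_num at h2)
  · intro s hs
    have h2 : 2 ≤ s := aux_mem_two ha hb hs
    exact ne_of_gt (Real.log_pos (by linarith))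

lemma li_sub {a b : ℝ} (ha : 2 ≤ a) (hb : 2 ≤ b) :
    li b - li a = ∫ s in a..b, 1 / Real.log s := by
  unfold li
  exact intervalIntegral.integral_interval_sub_left
    (aux_integrable le_rfl hb) (aux_integrable le_rfl ha)

lemma li_lt_imp {a b : ℝ} (ha : 2 ≤ a) (hb : 2 ≤ b) (h : li a < li b) : a ≤ b := by
  by_contra hab
  push_neg at hab
  have h1 : li a - li b = ∫ s in b..a, 1 / Real.log s := li_sub hb ha
  have h2 : (0:ℝ) ≤ ∫ s in b..a, 1 / Real.log s := by
    apply intervalIntegral.integral_nonneg hab.le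
    intro s hs
    have h2s : 2 ≤ s := le_trans hb hs.1
    have := Real.log_pos (show (1:ℝ) < s by linarith)
    positivity
  linarith

lemma loglog_sub {a b : ℝ} (ha : Real.exp 1 ≤ a) (hab : a ≤ b) :
    Real.log (Real.log b) - Real.log (Real.log a)
      = ∫ s in a..b, 1 / (s * Real.log s) := by
  have hea : (1:ℝ) < Real.exp 1 := by
    have := Real.add_one_lt_exp (by norm_num : (1:ℝ) ≠ 0)
    linarith
  symm
  apply intervalIntegral.integral_eq_sub_of_hasDerivAt
  · intro s hs
    have hsa : a ≤ s := by simpa [min_eq_left hab] using hs.1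
    have hs1 : 1 < s := lt_of_lt_of_le hea (le_trans ha hsa)
    have hls : Real.log s ≠ 0 := ne_of_gt (Real.log_pos hs1)
    have hs0 : s ≠ 0 := by linarith
    have := (Real.hasDerivAt_log hls).comp s (Real.hasDerivAt_log hs0)
    have e : (1:ℝ) / (s * Real.log s) = (Real.log s)⁻¹ * s⁻¹ := by ring
    rw [e]; exact this
  · apply ContinuousOn.intervalIntegrable
    apply ContinuousOn.div continuousOn_const
    · apply ContinuousOn.mul continuousOn_id
      exact Real.continuousOn_log.mono (fun s hs => by
        have hsa : a ≤ s := by simpa [min_eq_left hab] using hs.1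
        have hs1 : 1 < s := lt_of_lt_of_le hea (le_trans ha hsa)
        simp only [Set.mem_compl_iff, Set.mem_singleton_iff]
        intro h; rw [h] at hs1; norm_num at hs1)
    · intro s hs
      have hsa : a ≤ s := by simpa [min_eq_left hab] using hs.1
      have hs1 : 1 < s := lt_of_lt_of_le hea (le_trans ha hsa)
      have hls := Real.log_pos hs1
      have hs0 : 0 < s := by linarith
      positivity

lemma key_step {C a b : ℝ} (hC : 0 < C) (ha : Real.exp 1 ≤ a) (hb : Real.exp 1 ≤ b)
    (h : li b - li a = C) :
    Real.log (Real.log b) - Real.log (Real.log a) ≤ C / a := by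
  have he2 : (2:ℝ) ≤ Real.exp 1 := by
    have := Real.add_one_lt_exp (by norm_num : (1:ℝ) ≠ 0)
    linarith
  have ha2 : 2 ≤ a := le_trans he2 ha
  have hb2 : 2 ≤ b := le_trans he2 hb
  have hab : a ≤ b := li_lt_imp ha2 hb2 (by linarith)
  have ha0 : 0 < a := by linarith
  rw [loglog_sub ha hab]
  have hmono : (∫ s in a..b, 1 / (s * Real.log s))
      ≤ ∫ s in a..b, (1/a) * (1 / Real.log s) := by
    apply intervalIntegral.integral_mono_on hab
    · apply ContinuousOn.intervalIntegrable
      apply ContinuousOn.div continuousOn_const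
      · apply ContinuousOn.mul continuousOn_id
        exact Real.continuousOn_log.mono (fun s hs => by
          have hsa : a ≤ s := by simpa [min_eq_left hab] using hs.1
          simp only [Set.mem_compl_iff, Set.mem_singleton_iff]
          intro h'; rw [h'] at hsa; linarith)
      · intro s hs
        have hsa : a ≤ s := by simpa [min_eq_left hab] using hs.1
        have hls := Real.log_pos (show (1:ℝ) < s by linarith)
        have hs0 : (0:ℝ) < s := by linarith
        positivity
    · exact (aux_integrable ha2 hb2).const_mul _
    · intro s hs
      have hsa : a ≤ s := hs.1
      have hls : 0 < Real.log s := Real.log_pos (by linarith)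
      have hs0 : (0:ℝ) < s := by linarith
      have hstep : a * Real.log s ≤ s * Real.log s :=
        mul_le_mul_of_nonneg_right hsa hls.le
      calc 1 / (s * Real.log s) ≤ 1 / (a * Real.log s) :=
            one_div_le_one_div_of_le (by positivity) hstep
        _ = (1/a) * (1 / Real.log s) := by rw [one_div_mul_one_div]
  calc (∫ s in a..b, 1 / (s * Real.log s))
      ≤ ∫ s in a..b, (1/a) * (1 / Real.log s) := hmono
    _ = (1/a) * ∫ s in a..b, 1 / Real.log s := intervalIntegral.integral_const_mul _ _
    _ = (1/a) * C := by rw [← li_sub ha2 hb2, h]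
    _ = C / a := by ring

/-- Decay of the product `∏ (1 − 1/li⁻¹(C k + D))`: if `x = li⁻¹ ∘ (C · + D)`
on `[0, N]` with `x ≥ e`, then
`∏_{k=1}^N (1 − 1/x(k)) ≤ (log x(1) / log x(N))^{1/C}`. -/
theorem product_decay_estimate
    (C D : ℝ) (hC : 0 < C) (N : ℕ) (hN : 1 ≤ N)
    (x : ℝ → ℝ) (hx : ContinuousOn x (Set.Icc (0:ℝ) N))
    (hxe : ∀ t ∈ Set.Icc (0:ℝ) (N:ℝ), Real.exp 1 ≤ x t)
    (hli : ∀ t ∈ Set.Icc (0:ℝ) (N:ℝ), li (x t) = C * t + D) :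
    ∏ k ∈ Finset.Icc 1 N, (1 - 1 / x (k : ℝ)) ≤
      (Real.log (x 1) / Real.log (x N)) ^ ((1:ℝ) / C) := by
  have hea : (1:ℝ) < Real.exp 1 := by
    have := Real.add_one_lt_exp (by norm_num : (1:ℝ) ≠ 0)
    linarith
  have hmem : ∀ k : ℕ, k ≤ N → ((k:ℝ) ∈ Set.Icc (0:ℝ) (N:ℝ)) := by
    intro k hk
    exact ⟨by positivity, by exact_mod_cast hk⟩
  have hxpos : ∀ k : ℕ, k ≤ N → 1 < x (k:ℝ) := fun k hk =>
    lt_of_lt_of_le hea (hxe _ (hmem k hk))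
  -- per-k estimate
  have hkey : ∀ k : ℕ, k + 1 ≤ N →
      Real.log (Real.log (x ((k+1:ℕ):ℝ))) - Real.log (Real.log (x ((k:ℕ):ℝ)))
        ≤ C / x ((k:ℕ):ℝ) := by
    intro k hk
    have hk' : k ≤ N := le_trans (Nat.le_succ k) hk
    have h1 := hli _ (hmem k hk')
    have h2 := hli _ (hmem (k+1) hk)
    apply key_step hC (hxe _ (hmem k hk')) (hxe _ (hmem (k+1) hk))
    rw [h1, h2]
    push_cast
    ring
  -- telescoping sum bound
  obtain ⟨M, rfl⟩ : ∃ M, N = M + 1 := ⟨N - 1, (Nat.succ_pred_eq_of_pos hN).symm⟩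
  set f : ℕ → ℝ := fun i => (1/C) * Real.log (Real.log (x ((i+1:ℕ):ℝ))) with hf
  have hsum : (1/C) * (Real.log (Real.log (x ((M+1:ℕ):ℝ)))
        - Real.log (Real.log (x ((1:ℕ):ℝ))))
      ≤ ∑ k ∈ Finset.Icc 1 (M+1), 1 / x (k:ℝ) := by
    have htel : ∑ i ∈ Finset.range M, (f (i+1) - f i) = f M - f 0 :=
      Finset.sum_range_sub f M
    have hterm : ∀ i ∈ Finset.range M, f (i+1) - f i ≤ 1 / x ((i+1:ℕ):ℝ) := by
      intro i hi
      have hiM : i + 1 + 1 ≤ M + 1 := by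
        have := Finset.mem_range.mp hi; omega
      have h1 := hkey (i+1) hiM
      have hxp : 0 < x ((i+1:ℕ):ℝ) := lt_trans one_pos (hxpos (i+1) (by omega))
      rw [le_div_iff₀ hxp] at h1
      simp only [hf]
      rw [le_div_iff₀ hxp]
      have hCinv : (0:ℝ) < 1/C := by positivity
      nlinarith [mul_le_mul_of_nonneg_left h1 hCinv.le,
        one_div_mul_cancel (ne_of_gt hC)]
    have hf0 : f 0 = (1/C) * Real.log (Real.log (x ((1:ℕ):ℝ))) := by norm_num [hf]
    calc (1/C) * (Real.log (Real.log (x ((M+1:ℕ):ℝ)))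
          - Real.log (Real.log (x ((1:ℕ):ℝ))))
        = f M - f 0 := by rw [hf0, hf]; ring
      _ = ∑ i ∈ Finset.range M, (f (i+1) - f i) := htel.symm
      _ ≤ ∑ i ∈ Finset.range M, 1 / x ((i+1:ℕ):ℝ) := Finset.sum_le_sum hterm
      _ = ∑ k ∈ Finset.Icc 1 M, 1 / x (k:ℝ) := by
          rw [show Finset.Icc 1 M = Finset.Ico 1 (M+1) from by
              rw [Finset.Ico_add_one_right_eq_Icc], Finset.sum_Ico_eq_sum_range]
          simp [Nat.add_comm]
      _ ≤ ∑ k ∈ Finset.Icc 1 (M+1), 1 / x (k:ℝ) := by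
          apply Finset.sum_le_sum_of_subset_of_nonneg
          · exact Finset.Icc_subset_Icc_right (Nat.le_succ M)
          · intro k hk _
            have := hxpos k (Finset.mem_Icc.mp hk).2
            positivity
  -- product ≤ exp(-sum)
  have hprod : ∏ k ∈ Finset.Icc 1 (M+1), (1 - 1 / x (k:ℝ))
      ≤ Real.exp (∑ k ∈ Finset.Icc 1 (M+1), -(1 / x (k:ℝ))) := by
    rw [Real.exp_sum]
    apply Finset.prod_le_prod
    · intro k hk
      have h1 := hxpos k (Finset.mem_Icc.mp hk).2
      have : 1 / x (k:ℝ) < 1 := by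
        rw [div_lt_one (by linarith)]; linarith
      linarith
    · intro k hk
      have := Real.add_one_le_exp (-(1 / x (k:ℝ)))
      linarith
  -- conclude
  have hl1 : 0 < Real.log (x 1) := by
    have := hxe 1 ⟨by norm_num, by exact_mod_cast hN⟩
    exact Real.log_pos (by linarith)
  have hlN : 0 < Real.log (x ((M+1:ℕ):ℝ)) := by
    have := hxe _ (hmem (M+1) le_rfl)
    exact Real.log_pos (by linarith)
  have hrhs : (Real.log (x 1) / Real.log (x ((M+1:ℕ):ℝ))) ^ ((1:ℝ)/C)
      = Real.exp ((Real.log (Real.log (x 1)) - Real.log (Real.log (x ((M+1:ℕ):ℝ))))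
          * (1/C)) := by
    rw [Real.rpow_def_of_pos (div_pos hl1 hlN),
      Real.log_div (ne_of_gt hl1) (ne_of_gt hlN)]
  have hx1cast : x ((1:ℕ):ℝ) = x 1 := by norm_num
  calc ∏ k ∈ Finset.Icc 1 (M+1), (1 - 1 / x (k:ℝ))
      ≤ Real.exp (∑ k ∈ Finset.Icc 1 (M+1), -(1 / x (k:ℝ))) := hprod
    _ ≤ (Real.log (x 1) / Real.log (x ((M+1:ℕ):ℝ))) ^ ((1:ℝ)/C) := by
        rw [hrhs]
        apply Real.exp_le_exp.mpr
        rw [Finset.sum_neg_distrib]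
        rw [hx1cast] at hsum
        nlinarith [hsum]
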